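/- Let p = (p_h)_{h∈H} be a [0,1]^H-valued random vector, H finite. Say p is PRDS on h if for every measurable nondecreasing set D ⊆ [0,1]^H, u ↦ P(p ∈ D | p_h = u) is nondecreasing. If p is PRDS on h and P(p_h ≤ t) ≤ t for all t ∈ [0,1], and R : [0,1]^H → subsets of H is such that |R(p)| is nonincreasing in each coordinate, then for every c > 0, E[ 1_{p_h ≤ c|R(p)|} / |R(p)| ] ≤ c. -/

import Mathlib

open MeasureTheory ENNReal Set Finset

/-- Proposition 3.5: under the PRDS condition on `h` (in the conditioning-on-
`{p_h ≤ u}` form), if `|R(p)|` is nonincreasing in each coordinate, then the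
pair `(p_h, |R|)` satisfies the dependency control condition with the linear
shape function. -/
theorem dependency_control_PRDS_case
    {Ω : Type*} [MeasurableSpace Ω] (P : Measure Ω) [IsProbabilityMeasure P]
    {ι : Type*} [Fintype ι] [DecidableEq ι]
    (Λ : ι → ℝ) (hΛ : ∀ g, 0 < Λ g)
    (p : ι → Ω → ℝ) (hp : ∀ g, Measurable (p g))
    (hprange : ∀ g ω, p g ω ∈ Set.Icc (0:ℝ) 1)
    (h : ι)
    (hUnif : ∀ t : ℝ, 0 ≤ t → t ≤ 1 → P {ω | p h ω ≤ t} ≤ ENNReal.ofReal t)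
    -- PRDS on h, in the conditioning form
    (hPRDS : ∀ D : Set (ι → ℝ), MeasurableSet D →
      (∀ z z' : ι → ℝ, z ∈ D → (∀ i, z i ≤ z' i) → z' ∈ D) →
      ∀ u u' : ℝ, u ≤ u' → 0 < P {ω | p h ω ≤ u} →
        P {ω | (fun i => p i ω) ∈ D ∧ p h ω ≤ u} / P {ω | p h ω ≤ u}
          ≤ P {ω | (fun i => p i ω) ∈ D ∧ p h ω ≤ u'} / P {ω | p h ω ≤ u'})
    (R : (ι → ℝ) → Finset ι)
    (hRmeas : ∀ g, MeasurableSet {x : ι → ℝ | g ∈ R x})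
    (hRmono : ∀ x y : ι → ℝ, (∀ i, x i ≤ y i) →
      (∑ g ∈ R y, Λ g) ≤ ∑ g ∈ R x, Λ g)
    (c : ℝ) (hc : 0 < c) :
    ∫⁻ ω in {ω | p h ω ≤ c * (∑ g ∈ R (fun i => p i ω), Λ g)
        ∧ 0 < ∑ g ∈ R (fun i => p i ω), Λ g},
      ENNReal.ofReal (∑ g ∈ R (fun i => p i ω), Λ g)⁻¹ ∂P
      ≤ ENNReal.ofReal c := by
  classical
  -- the vector of p-values
  set pvec : Ω → (ι → ℝ) := fun ω i => p i ω with hpvec_def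
  have hpvec : Measurable pvec := measurable_pi_lambda _ (fun i => hp i)
  -- the weight of the selected set, as a function of the p-value vector
  set Sx : (ι → ℝ) → ℝ := fun x => ∑ g ∈ R x, Λ g with hSx_def
  have hSxmeas : Measurable Sx := by
    have hrw : Sx = fun x => ∑ g ∈ Finset.univ, (if g ∈ R x then Λ g else 0) := by
      funext x
      rw [hSx_def]
      simp only
      rw [Finset.sum_ite_mem, Finset.univ_inter]
    rw [hrw]
    exact Finset.measurable_sum _ (fun g _ =>
      Measurable.ite (hRmeas g) measurable_const measurable_const)
  set S : Ω → ℝ := fun ω => Sx (pvec ω) with hS_def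
  have hS : Measurable S := hSxmeas.comp hpvec
  -- basic real-valued quantities
  set Fr : ℝ → ℝ := fun t => (P {ω | p h ω ≤ t}).toReal with hFr_def
  set N : ℝ → ℝ → ℝ := fun s t => (P {ω | S ω ≤ s ∧ p h ω ≤ t}).toReal with hN_def
  have hFrmono : ∀ {t t' : ℝ}, t ≤ t' → Fr t ≤ Fr t' := by
    intro t t' htt
    exact ENNReal.toReal_le_toReal (measure_ne_top _ _) (measure_ne_top _ _) |>.mpr
      (measure_mono (fun ω hω => le_trans hω htt))
  have hFrnonneg : ∀ t, 0 ≤ Fr t := fun t => ENNReal.toReal_nonneg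
  have hFrle : ∀ t, 0 ≤ t → Fr t ≤ t := by
    intro t ht
    by_cases h1 : t ≤ 1
    · have := hUnif t ht h1
      calc Fr t ≤ (ENNReal.ofReal t).toReal :=
            ENNReal.toReal_le_toReal (measure_ne_top _ _) ofReal_ne_top |>.mpr this
        _ = t := ENNReal.toReal_ofReal ht
    · have h2 : Fr t ≤ 1 := by
        have h3 := measure_mono (Set.subset_univ {ω | p h ω ≤ t}) (μ := P)
        have h4 : (P {ω | p h ω ≤ t}).toReal ≤ (P Set.univ).toReal :=
          ENNReal.toReal_le_toReal (measure_ne_top _ _) (measure_ne_top _ _) |>.mpr h3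
        simpa using h4
      linarith
  have hNnonneg : ∀ s t, 0 ≤ N s t := fun s t => ENNReal.toReal_nonneg
  have hNleF : ∀ s t, N s t ≤ Fr t := by
    intro s t
    exact ENNReal.toReal_le_toReal (measure_ne_top _ _) (measure_ne_top _ _) |>.mpr
      (measure_mono (fun ω hω => hω.2))
  have hNmono : ∀ {s s' : ℝ} (t : ℝ), s ≤ s' → N s t ≤ N s' t := by
    intro s s' t hss
    exact ENNReal.toReal_le_toReal (measure_ne_top _ _) (measure_ne_top _ _) |>.mpr
      (measure_mono (fun ω hω => ⟨le_trans hω.1 hss, hω.2⟩))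
  -- the PRDS ratio inequality, in real form
  have hratio : ∀ (s u u' : ℝ), u ≤ u' → 0 < Fr u → N s u / Fr u ≤ N s u' / Fr u' := by
    intro s u u' huu hFu
    have hDmeas : MeasurableSet {x : ι → ℝ | Sx x ≤ s} := hSxmeas measurableSet_Iic
    have hDmono : ∀ z z' : ι → ℝ, z ∈ {x : ι → ℝ | Sx x ≤ s} → (∀ i, z i ≤ z' i) →
        z' ∈ {x : ι → ℝ | Sx x ≤ s} := by
      intro z z' hz hzz
      exact le_trans (hRmono z z' hzz) hz
    have hFupos : 0 < P {ω | p h ω ≤ u} := by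
      rw [hFr_def] at hFu
      simp only at hFu
      exact (ENNReal.toReal_pos_iff.mp hFu).1
    have key := hPRDS _ hDmeas hDmono u u' huu hFupos
    have hsetu : {ω | (fun i => p i ω) ∈ {x : ι → ℝ | Sx x ≤ s} ∧ p h ω ≤ u}
        = {ω | S ω ≤ s ∧ p h ω ≤ u} := rfl
    have hsetu' : {ω | (fun i => p i ω) ∈ {x : ι → ℝ | Sx x ≤ s} ∧ p h ω ≤ u'}
        = {ω | S ω ≤ s ∧ p h ω ≤ u'} := rfl
    rw [hsetu, hsetu'] at key
    have hFu'pos : (0:ℝ≥0∞) < P {ω | p h ω ≤ u'} :=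
      lt_of_lt_of_le hFupos (measure_mono (fun ω hω => le_trans hω huu))
    have h1 : (P {ω | S ω ≤ s ∧ p h ω ≤ u} / P {ω | p h ω ≤ u}).toReal
        ≤ (P {ω | S ω ≤ s ∧ p h ω ≤ u'} / P {ω | p h ω ≤ u'}).toReal := by
      apply (ENNReal.toReal_le_toReal _ _).mpr key
      · exact (ENNReal.div_lt_top (measure_ne_top _ _) hFupos.ne').ne
      · exact (ENNReal.div_lt_top (measure_ne_top _ _) hFu'pos.ne').ne
    simpa [hN_def, hFr_def, ENNReal.toReal_div] using h1
  -- the conditional probability function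
  set G : ℝ → ℝ := fun s => if 0 < Fr (c * s) then N s (c * s) / Fr (c * s) else 0
    with hG_def
  have hGnonneg : ∀ s, 0 ≤ G s := by
    intro s
    rw [hG_def]
    simp only
    split
    · exact div_nonneg (hNnonneg _ _) (hFrnonneg _)
    · exact le_refl 0
  have hGle1 : ∀ s, G s ≤ 1 := by
    intro s
    rw [hG_def]
    simp only
    split
    · rename_i hpos
      exact (div_le_one hpos).mpr (hNleF _ _)
    · exact zero_le_one
  -- the key intermediate bound : G a ≤ N a (c*s) / Fr (c*s) when Fr (c*s) > 0
  have hGmid : ∀ a s : ℝ, a ≤ s → 0 < Fr (c * s) → G a ≤ N a (c * s) / Fr (c * s) := by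
    intro a s has hFs
    by_cases hFa : 0 < Fr (c * a)
    · have hcacs : c * a ≤ c * s := by nlinarith
      have h1 : G a = N a (c * a) / Fr (c * a) := by rw [hG_def]; simp only [if_pos hFa]
      rw [h1]
      exact hratio a _ _ hcacs hFa
    · have h1 : G a = 0 := by rw [hG_def]; simp only [if_neg hFa]
      rw [h1]
      exact div_nonneg (hNnonneg _ _) (hFrnonneg _)
  have hGmono : ∀ a s : ℝ, a ≤ s → G a ≤ G s := by
    intro a s has
    by_cases hFs : 0 < Fr (c * s)
    · have h1 : G s = N s (c * s) / Fr (c * s) := by rw [hG_def]; simp only [if_pos hFs]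
      rw [h1]
      calc G a ≤ N a (c * s) / Fr (c * s) := hGmid a s has hFs
        _ ≤ N s (c * s) / Fr (c * s) := by
          rw [div_eq_mul_inv, div_eq_mul_inv]
          exact mul_le_mul_of_nonneg_right (hNmono _ has) (inv_nonneg.mpr (hFrnonneg _))
    · have h1 : G s = 0 := by rw [hG_def]; simp only [if_neg hFs]
      have hFa : ¬ (0 < Fr (c * a)) := by
        intro hFa
        have hcacs : c * a ≤ c * s := by nlinarith
        exact hFs (lt_of_lt_of_le hFa (hFrmono hcacs))
      have h2 : G a = 0 := by rw [hG_def]; simp only [if_neg hFa]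
      rw [h1, h2]
  -- the per-interval bound
  have hpair : ∀ a s : ℝ, 0 ≤ a → a < s →
      (P {ω | p h ω ≤ c * s ∧ a < S ω ∧ S ω ≤ s}).toReal ≤ c * s * (G s - G a) := by
    intro a s ha has
    set E : Set Ω := {ω | p h ω ≤ c * s ∧ a < S ω ∧ S ω ≤ s} with hE_def
    by_cases hFs : 0 < Fr (c * s)
    · -- main case
      have hGs : G s = N s (c * s) / Fr (c * s) := by rw [hG_def]; simp only [if_pos hFs]
      have hYmeas : MeasurableSet {ω | S ω ≤ a ∧ p h ω ≤ c * s} :=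
        (hS measurableSet_Iic).inter ((hp h) measurableSet_Iic)
      have hdisj : Disjoint E {ω | S ω ≤ a ∧ p h ω ≤ c * s} := by
        rw [Set.disjoint_left]
        intro ω hω hω'
        exact absurd hω'.1 (not_le.mpr hω.2.1)
      have hsub : E ∪ {ω | S ω ≤ a ∧ p h ω ≤ c * s} ⊆ {ω | S ω ≤ s ∧ p h ω ≤ c * s} := by
        intro ω hω
        rcases hω with hω | hω
        · exact ⟨hω.2.2, hω.1⟩
        · exact ⟨le_trans hω.1 (le_of_lt has), hω.2⟩
      have h1 : P E + P {ω | S ω ≤ a ∧ p h ω ≤ c * s} ≤ P {ω | S ω ≤ s ∧ p h ω ≤ c * s} := by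
        rw [← measure_union hdisj hYmeas]
        exact measure_mono hsub
      have h2 : (P E).toReal + N a (c * s) ≤ N s (c * s) := by
        have h3 := (ENNReal.toReal_le_toReal
          (ENNReal.add_ne_top.mpr ⟨measure_ne_top _ _, measure_ne_top _ _⟩)
          (measure_ne_top _ _)).mpr h1
        rw [ENNReal.toReal_add (measure_ne_top _ _) (measure_ne_top _ _)] at h3
        exact h3
      have h4 : (P E).toReal ≤ Fr (c * s) * (G s - G a) := by
        have h5 : G a ≤ N a (c * s) / Fr (c * s) := hGmid a s (le_of_lt has) hFs
        have h6 : Fr (c * s) * (N s (c * s) / Fr (c * s) - N a (c * s) / Fr (c * s))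
            = N s (c * s) - N a (c * s) := by
          field_simp
        have h7 : Fr (c * s) * (G s - G a)
            ≥ Fr (c * s) * (N s (c * s) / Fr (c * s) - N a (c * s) / Fr (c * s)) := by
          apply mul_le_mul_of_nonneg_left _ (hFrnonneg _)
          rw [hGs]
          linarith
        linarith
      have h8 : Fr (c * s) * (G s - G a) ≤ c * s * (G s - G a) := by
        apply mul_le_mul_of_nonneg_right _ _
        · exact hFrle _ (by nlinarith)
        · have := hGmono a s (le_of_lt has)
          linarith
      linarith
    · -- degenerate case : P (p h ≤ c*s) has measure zero
      have hFs0 : Fr (c * s) = 0 := le_antisymm (not_lt.mp hFs) (hFrnonneg _)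
      have h1 : (P E).toReal ≤ Fr (c * s) := by
        exact ENNReal.toReal_le_toReal (measure_ne_top _ _) (measure_ne_top _ _) |>.mpr
          (measure_mono (fun ω hω => hω.1))
      have hFa : ¬ (0 < Fr (c * a)) := by
        intro hFa
        have hcacs : c * a ≤ c * s := by nlinarith
        exact hFs (lt_of_lt_of_le hFa (hFrmono hcacs))
      have h2 : G a = 0 := by rw [hG_def]; simp only [if_neg hFa]
      have h3 : G s = 0 := by rw [hG_def]; simp only [if_neg hFs]
      rw [h2, h3, hFs0] at *
      have h4 : (0:ℝ) ≤ (P E).toReal := ENNReal.toReal_nonneg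
      nlinarith
  -- helper : last element of a <-chain dominates the base point
  have hlast : ∀ (l : List ℝ) (x : ℝ), List.Chain (· < ·) x l → x ≤ l.getLastD x := by
    intro l
    induction l with
    | nil => intro x _; exact le_refl x
    | cons b t ih =>
      intro x hch
      unfold List.Chain at hch
      rw [List.chain_cons] at hch
      rw [List.getLastD_cons]
      exact le_trans (le_of_lt hch.1) (ih b hch.2)
  -- the main induction over the (sorted) list of possible positive values of S
  have main : ∀ (l : List ℝ) (a : ℝ), 0 ≤ a → List.Chain (· < ·) a l →
      ∫⁻ ω in {ω | p h ω ≤ c * S ω ∧ a < S ω ∧ S ω ∈ l},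
        ENNReal.ofReal (S ω)⁻¹ ∂P
      ≤ ENNReal.ofReal (c * (G (l.getLastD a) - G a)) := by
    intro l
    induction l with
    | nil =>
      intro a _ _
      have hempty : {ω | p h ω ≤ c * S ω ∧ a < S ω ∧ S ω ∈ ([] : List ℝ)} = ∅ := by
        ext ω
        simp
      rw [hempty]
      simp
    | cons s t ih =>
      intro a ha hch
      unfold List.Chain at hch
      rw [List.chain_cons] at hch
      obtain ⟨has, hcht⟩ := hch
      have hs0 : 0 < s := lt_of_le_of_lt ha has
      set region := {ω | p h ω ≤ c * S ω ∧ a < S ω ∧ S ω ∈ s :: t} with hregion_def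
      have hpw : List.Pairwise (· < ·) (s :: t) := List.isChain_iff_pairwise.mp hcht
      have hmem_t_gt : ∀ b ∈ t, s < b := (List.pairwise_cons.mp hpw).1
      -- split the region
      have hsplit : region ⊆ (region ∩ {ω | S ω = s})
          ∪ {ω | p h ω ≤ c * S ω ∧ s < S ω ∧ S ω ∈ t} := by
        intro ω hω
        rcases List.mem_cons.mp hω.2.2 with he | ht
        · exact Or.inl ⟨hω, he⟩
        · exact Or.inr ⟨hω.1, hmem_t_gt _ ht, ht⟩
      have step1 : ∫⁻ ω in region, ENNReal.ofReal (S ω)⁻¹ ∂P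
          ≤ (∫⁻ ω in region ∩ {ω | S ω = s}, ENNReal.ofReal (S ω)⁻¹ ∂P)
            + ∫⁻ ω in {ω | p h ω ≤ c * S ω ∧ s < S ω ∧ S ω ∈ t},
                ENNReal.ofReal (S ω)⁻¹ ∂P :=
        le_trans (lintegral_mono_set hsplit) (lintegral_union_le _ _ _)
      -- bound the first piece
      have hmeas_region : MeasurableSet region := by
        apply MeasurableSet.inter
        · exact measurableSet_le (hp h) (measurable_const.mul hS)
        · apply MeasurableSet.inter
          · exact measurableSet_lt measurable_const hS
          · exact hS ((s :: t).finite_toSet.measurableSet)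
      have hmeas1 : MeasurableSet (region ∩ {ω | S ω = s}) :=
        hmeas_region.inter (hS (measurableSet_singleton s))
      have piece1 : ∫⁻ ω in region ∩ {ω | S ω = s}, ENNReal.ofReal (S ω)⁻¹ ∂P
          ≤ ENNReal.ofReal (c * (G s - G a)) := by
        have e1 : ∫⁻ ω in region ∩ {ω | S ω = s}, ENNReal.ofReal (S ω)⁻¹ ∂P
            ≤ ∫⁻ _ω in region ∩ {ω | S ω = s}, ENNReal.ofReal s⁻¹ ∂P := by
          apply setLIntegral_mono' hmeas1
          intro ω hω
          rw [hω.2]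
        have e2 : ∫⁻ _ω in region ∩ {ω | S ω = s}, ENNReal.ofReal s⁻¹ ∂P
            = ENNReal.ofReal s⁻¹ * P (region ∩ {ω | S ω = s}) :=
          setLIntegral_const _ _
        have hEsub : region ∩ {ω | S ω = s} ⊆ {ω | p h ω ≤ c * s ∧ a < S ω ∧ S ω ≤ s} := by
          intro ω hω
          obtain ⟨⟨h1, h2, _⟩, h4⟩ := hω
          rw [Set.mem_setOf_eq] at h4
          rw [h4] at h1
          exact ⟨h1, h2, le_of_eq h4⟩
        have e3 : ENNReal.ofReal s⁻¹ * P (region ∩ {ω | S ω = s})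
            ≤ ENNReal.ofReal s⁻¹ * P {ω | p h ω ≤ c * s ∧ a < S ω ∧ S ω ≤ s} :=
          mul_le_mul_right (measure_mono hEsub) _
        have e4 : ENNReal.ofReal s⁻¹ * P {ω | p h ω ≤ c * s ∧ a < S ω ∧ S ω ≤ s}
            ≤ ENNReal.ofReal (c * (G s - G a)) := by
          rw [← ENNReal.ofReal_toReal
            (measure_ne_top P {ω | p h ω ≤ c * s ∧ a < S ω ∧ S ω ≤ s}),
            ← ENNReal.ofReal_mul (inv_nonneg.mpr (le_of_lt hs0))]
          apply ENNReal.ofReal_le_ofReal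
          have h5 := hpair a s ha has
          have h6 : s⁻¹ * (P {ω | p h ω ≤ c * s ∧ a < S ω ∧ S ω ≤ s}).toReal
              ≤ s⁻¹ * (c * s * (G s - G a)) :=
            mul_le_mul_of_nonneg_left h5 (inv_nonneg.mpr (le_of_lt hs0))
          have h7 : s⁻¹ * (c * s * (G s - G a)) = c * (G s - G a) := by
            field_simp
          linarith
        calc ∫⁻ ω in region ∩ {ω | S ω = s}, ENNReal.ofReal (S ω)⁻¹ ∂P
            ≤ ∫⁻ _ω in region ∩ {ω | S ω = s}, ENNReal.ofReal s⁻¹ ∂P := e1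
          _ = ENNReal.ofReal s⁻¹ * P (region ∩ {ω | S ω = s}) := e2
          _ ≤ ENNReal.ofReal s⁻¹ * P {ω | p h ω ≤ c * s ∧ a < S ω ∧ S ω ≤ s} := e3
          _ ≤ ENNReal.ofReal (c * (G s - G a)) := e4
      -- bound the second piece via the induction hypothesis
      have piece2 := ih s (le_of_lt hs0) hcht
      -- combine
      have hGsa : G a ≤ G s := hGmono a s (le_of_lt has)
      have hGst : G s ≤ G (t.getLastD s) := hGmono s _ (hlast t s hcht)
      have hcomb : ENNReal.ofReal (c * (G s - G a)) + ENNReal.ofReal (c * (G (t.getLastD s) - G s))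
          = ENNReal.ofReal (c * (G (t.getLastD s) - G a)) := by
        rw [← ENNReal.ofReal_add (by nlinarith) (by nlinarith)]
        ring_nf
      rw [List.getLastD_cons]
      calc ∫⁻ ω in region, ENNReal.ofReal (S ω)⁻¹ ∂P
          ≤ (∫⁻ ω in region ∩ {ω | S ω = s}, ENNReal.ofReal (S ω)⁻¹ ∂P)
            + ∫⁻ ω in {ω | p h ω ≤ c * S ω ∧ s < S ω ∧ S ω ∈ t},
                ENNReal.ofReal (S ω)⁻¹ ∂P := step1
        _ ≤ ENNReal.ofReal (c * (G s - G a)) + ENNReal.ofReal (c * (G (t.getLastD s) - G s)) :=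
            add_le_add piece1 piece2
        _ = ENNReal.ofReal (c * (G (t.getLastD s) - G a)) := hcomb
  -- the set of the possible positive values of S
  set Vpos : Finset ℝ :=
    (Finset.image (fun T : Finset ι => ∑ g ∈ T, Λ g) Finset.univ).filter (fun v => 0 < v)
    with hVpos_def
  set l : List ℝ := Vpos.sort (· ≤ ·) with hl_def
  have hlpos : ∀ b ∈ l, 0 < b := by
    intro b hb
    rw [hl_def, Finset.mem_sort] at hb
    exact (Finset.mem_filter.mp hb).2
  have hchain : List.Chain (· < ·) 0 l := by
    unfold List.Chain
    rw [List.isChain_iff_pairwise, List.pairwise_cons]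
    exact ⟨hlpos, (Finset.sortedLT_sort Vpos).pairwise⟩
  have hmeml : ∀ ω, 0 < S ω → S ω ∈ l := by
    intro ω hSω
    rw [hl_def, Finset.mem_sort, hVpos_def, Finset.mem_filter]
    refine ⟨Finset.mem_image.mpr ⟨R (pvec ω), Finset.mem_univ _, rfl⟩, hSω⟩
  have hA : {ω | p h ω ≤ c * (∑ g ∈ R (fun i => p i ω), Λ g)
        ∧ 0 < ∑ g ∈ R (fun i => p i ω), Λ g}
      ⊆ {ω | p h ω ≤ c * S ω ∧ 0 < S ω ∧ S ω ∈ l} := by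
    intro ω hω
    exact ⟨hω.1, hω.2, hmeml ω hω.2⟩
  have hfinal := main l 0 le_rfl hchain
  calc ∫⁻ ω in {ω | p h ω ≤ c * (∑ g ∈ R (fun i => p i ω), Λ g)
        ∧ 0 < ∑ g ∈ R (fun i => p i ω), Λ g},
        ENNReal.ofReal (∑ g ∈ R (fun i => p i ω), Λ g)⁻¹ ∂P
      = ∫⁻ ω in {ω | p h ω ≤ c * (∑ g ∈ R (fun i => p i ω), Λ g)
        ∧ 0 < ∑ g ∈ R (fun i => p i ω), Λ g}, ENNReal.ofReal (S ω)⁻¹ ∂P := rfl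
    _ ≤ ∫⁻ ω in {ω | p h ω ≤ c * S ω ∧ 0 < S ω ∧ S ω ∈ l},
          ENNReal.ofReal (S ω)⁻¹ ∂P := lintegral_mono_set hA
    _ ≤ ENNReal.ofReal (c * (G (l.getLastD 0) - G 0)) := hfinal
    _ ≤ ENNReal.ofReal c := by
        apply ENNReal.ofReal_le_ofReal
        have h1 := hGle1 (l.getLastD 0)
        have h2 := hGnonneg 0
        nlinarith
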